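/- In any Coxeter group W, for u < v in the Bruhat order, the interval [u,v] contains exactly as many elements of even length as elements of odd length; equivalently, the sum over w in [u,v] of (-1)^(ℓ(w)) equals 0. -/

import Mathlib

open Polynomial

open List CoxeterSystem
open scoped Classical

variable {B W : Type*} [Group W] {M : CoxeterMatrix B}


/-- An edge of the Bruhat graph: `v = u * t` for a reflection `t`, with `ℓ(u) < ℓ(v)`. -/
def BruhatEdge (cs : CoxeterSystem M W) (u v : W) : Prop :=
  ∃ t : W, cs.IsReflection t ∧ v = u * t ∧ cs.length u < cs.length v

/-- The Bruhat order on a Coxeter group. -/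
def BruhatLE (cs : CoxeterSystem M W) : W → W → Prop :=
  Relation.ReflTransGen (BruhatEdge cs)

namespace BruhatAux

variable (cs : CoxeterSystem M W)

local prefix:100 "s" => cs.simple
local prefix:100 "π" => cs.wordProd
local prefix:100 "ℓ" => cs.length
local prefix:100 "ris" => cs.rightInvSeq

/-- The basic transposition-sign map on `W × ℤˣ`. -/
noncomputable def sigFun (i : B) : W × ℤˣ → W × ℤˣ :=
  fun p => (s i * p.1 * s i, if p.1 = s i then -p.2 else p.2)

theorem sigFun_involutive (i : B) : Function.Involutive (sigFun cs i) := by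
  rintro ⟨t, ε⟩
  simp only [sigFun]
  by_cases h : t = s i
  · subst h
    simp [cs.simple_mul_simple_self, cs.simple_mul_simple_cancel_right]
  · have h2 : s i * t * s i ≠ s i := by
      intro hc
      apply h
      have := congrArg (fun x => s i * x * s i) hc
      simpa [mul_assoc, cs.simple_mul_simple_cancel_left,
        cs.simple_mul_simple_self, cs.simple_mul_simple_cancel_right] using this
    simp only [h, if_neg h2, if_neg h, Prod.mk.injEq]
    refine ⟨?_, rfl⟩
    calc s i * (s i * t * s i) * s i
        = s i * (s i * t) * (s i * s i) := by group
      _ = t := by rw [cs.simple_mul_simple_self, cs.simple_mul_simple_cancel_left, mul_one]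

/-- The permutation on `W × ℤˣ` corresponding to a simple reflection. -/
noncomputable def sig (i : B) : Equiv.Perm (W × ℤˣ) := (sigFun_involutive cs i).toPerm

theorem sig_apply (i : B) (p : W × ℤˣ) :
    sig cs i p = (s i * p.1 * s i, if p.1 = s i then -p.2 else p.2) := rfl

theorem prodSig_apply (ω : List B) (p : W × ℤˣ) :
    (ω.map (sig cs)).prod p =
      (π ω * p.1 * (π ω)⁻¹, (-1 : ℤˣ) ^ ((ris ω).count p.1) * p.2) := by
  induction ω with
  | nil => simp [wordProd_nil]
  | cons i ω ih =>
    rw [List.map_cons, List.prod_cons, Equiv.Perm.mul_apply, ih, sig_apply]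
    have hris : ris (i :: ω) = ((π ω)⁻¹ * s i * π ω) :: ris ω := rfl
    rw [hris, List.count_cons]
    have hcond : (π ω * p.1 * (π ω)⁻¹ = s i) ↔ (p.1 = (π ω)⁻¹ * s i * π ω) := by
      constructor
      · intro h; rw [← h]; group
      · intro h; rw [h]; group
    simp only [Prod.mk.injEq]
    refine ⟨?_, ?_⟩
    · simp only [wordProd_cons]
      rw [mul_inv_rev, cs.inv_simple]
      group
    · by_cases h : p.1 = (π ω)⁻¹ * s i * π ω
      · rw [if_pos (hcond.mpr h), if_pos (beq_iff_eq.mpr h.symm)]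
        rw [pow_succ]
        simp [mul_comm, mul_left_comm, mul_neg, neg_mul]
      · rw [if_neg (fun hc => h (hcond.mp hc)),
          if_neg (by simpa using fun hc => h hc.symm)]
        simp


theorem sj_conj_pow (i j : B) (q : ℕ) : s j * (s i * s j) ^ q = (s j * s i) ^ q * s j := by
  induction q with
  | zero => simp
  | succ q ih =>
    rw [pow_succ, ← mul_assoc, ih, pow_succ]
    group

theorem inv_sisj_pow (i j : B) (q : ℕ) : ((s i * s j) ^ q)⁻¹ = (s j * s i) ^ q := by
  rw [← inv_pow]
  congr 1
  rw [mul_inv_rev, cs.inv_simple, cs.inv_simple]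

theorem F_eq (i j : B) (r : ℕ) :
    (π (alternatingWord i j r))⁻¹ * s (if Even r then j else i) * π (alternatingWord i j r)
      = s j * (s i * s j) ^ r := by
  rcases Nat.even_or_odd r with he | ho
  · obtain ⟨q, rfl⟩ := he
    have hev : Even (q + q) := ⟨q, rfl⟩
    rw [if_pos hev, cs.prod_alternatingWord_eq_mul_pow, if_pos hev, one_mul]
    have hdiv : (q + q) / 2 = q := by omega
    rw [hdiv, pow_add, inv_sisj_pow, ← sj_conj_pow, mul_assoc]
  · obtain ⟨q, rfl⟩ := ho
    have hne : ¬ Even (2 * q + 1) := by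
      simp [Nat.even_add_one, Nat.even_mul]
    rw [if_neg hne, cs.prod_alternatingWord_eq_mul_pow, if_neg hne]
    have hdiv : (2 * q + 1) / 2 = q := by omega
    rw [hdiv]
    have hexp : 2 * q + 1 = q + (1 + q) := by ring
    rw [hexp, pow_add, pow_add, pow_one]
    rw [mul_inv_rev, cs.inv_simple, inv_sisj_pow, ← sj_conj_pow]
    simp only [mul_assoc]

theorem ris_alternatingWord (i j : B) (n : ℕ) :
    ris (alternatingWord i j n) = ((range n).reverse).map (fun r => s j * (s i * s j) ^ r) := by
  induction n with
  | zero => simp [alternatingWord, rightInvSeq]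
  | succ n ih =>
    rw [alternatingWord_succ', range_succ, reverse_append]
    simp only [reverse_singleton, singleton_append, map_cons]
    rw [← ih, ← F_eq cs i j n]
    rfl

theorem count_ris_alt_even (i j : B) (t : W) :
    Even ((ris (alternatingWord i j (2 * M i j))).count t) := by
  rw [ris_alternatingWord]
  rw [List.map_reverse, List.count_reverse]
  have h2 : 2 * M i j = M i j + M i j := by ring
  rw [h2, range_add, List.map_append, List.count_append, List.map_map]
  have hmap : (List.map ((fun r => s j * (s i * s j) ^ r) ∘ (fun x => M i j + x)) (range (M i j)))
      = List.map (fun r => s j * (s i * s j) ^ r) (range (M i j)) := by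
    apply List.map_congr_left
    intro r _
    simp only [Function.comp_apply]
    rw [pow_add, cs.simple_mul_simple_pow, one_mul]
  rw [hmap]
  exact ⟨_, rfl⟩

theorem alt_two_succ (i j : B) (k : ℕ) :
    alternatingWord i j (2 * (k + 1)) = i :: j :: alternatingWord i j (2 * k) := by
  have h1 : 2 * (k + 1) = (2 * k + 1) + 1 := by ring
  rw [h1, alternatingWord_succ']
  rw [if_neg (by simp [Nat.even_add_one, Nat.even_mul])]
  rw [alternatingWord_succ']
  rw [if_pos (by simp [Nat.even_mul])]

theorem prod_sig_alt (i j : B) (k : ℕ) :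
    (List.map (sig cs) (alternatingWord i j (2 * k))).prod = (sig cs i * sig cs j) ^ k := by
  induction k with
  | zero => simp [alternatingWord]
  | succ k ih =>
    rw [alt_two_succ, List.map_cons, List.map_cons, List.prod_cons, List.prod_cons, ih,
      pow_succ']
    rw [← mul_assoc]

theorem sig_liftable : CoxeterMatrix.IsLiftable M (fun i => sig cs i) := by
  intro i j
  show (sig cs i * sig cs j) ^ M i j = 1
  rw [← prod_sig_alt]
  have hπ : π (alternatingWord i j (2 * M i j)) = 1 := by
    rw [cs.prod_alternatingWord_eq_mul_pow]
    rw [if_pos (by simp [Nat.even_mul])]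
    have h2 : 2 * M i j / 2 = M i j := by omega
    rw [h2, one_mul, cs.simple_mul_simple_pow]
  apply Equiv.ext
  intro p
  rw [Equiv.Perm.one_apply, prodSig_apply, hπ,
    (count_ris_alt_even cs i j p.1).neg_one_pow]
  simp

noncomputable def prm : W →* Equiv.Perm (W × ℤˣ) :=
  cs.lift ⟨fun i => sig cs i, sig_liftable cs⟩

theorem prm_simple (i : B) : prm cs (s i) = sig cs i :=
  cs.lift_apply_simple (sig_liftable cs) i

theorem prm_wordProd (ω : List B) : prm cs (π ω) = (List.map (sig cs) ω).prod := by
  induction ω with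
  | nil => simp [wordProd_nil]
  | cons i ω ih =>
    rw [wordProd_cons, map_mul, ih, List.map_cons, List.prod_cons, prm_simple]

theorem prm_apply_word (ω : List B) (p : W × ℤˣ) :
    prm cs (π ω) p = (π ω * p.1 * (π ω)⁻¹, (-1 : ℤˣ) ^ ((ris ω).count p.1) * p.2) := by
  rw [prm_wordProd, prodSig_apply]

theorem prm_fst (u : W) (p : W × ℤˣ) : (prm cs u p).1 = u * p.1 * u⁻¹ := by
  obtain ⟨ω, -, rfl⟩ := cs.exists_reduced_word' u
  rw [prm_apply_word]

theorem prm_snd_neg (u : W) (x : W) (ε : ℤˣ) :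
    prm cs u (x, -ε) = ((prm cs u (x, ε)).1, -(prm cs u (x, ε)).2) := by
  obtain ⟨ω, -, rfl⟩ := cs.exists_reduced_word' u
  rw [prm_apply_word, prm_apply_word]
  simp [mul_neg]

theorem neg_one_pow_odd_iff (c : ℕ) : (-1 : ℤˣ) ^ c = -1 ↔ Odd c := by
  constructor
  · intro h
    by_contra hc
    rw [Nat.not_odd_iff_even] at hc
    rw [hc.neg_one_pow] at h
    exact absurd h (by decide)
  · intro h; exact h.neg_one_pow

theorem prm_refl_self {t : W} (ht : cs.IsReflection t) : prm cs t (t, 1) = (t, -1) := by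
  obtain ⟨w, i, rfl⟩ := ht
  set t := w * s i * w⁻¹ with hts
  have h1 : prm cs w⁻¹ (t, 1) = (s i, (prm cs w⁻¹ (t, (1:ℤˣ))).2) := by
    apply Prod.ext
    · rw [prm_fst]
      simp only [hts]
      group
    · rfl
  have h2 : prm cs t (t, 1) = prm cs w (prm cs (s i) (prm cs w⁻¹ (t, 1))) := by
    rw [hts]
    simp only [map_mul, map_inv]
    rfl
  set ε := (prm cs w⁻¹ (t, (1:ℤˣ))).2 with hε
  have h3 : prm cs (s i) ((s i : W), ε) = ((s i : W), -ε) := by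
    rw [prm_simple, sig_apply]
    simp [cs.simple_mul_simple_self, cs.simple_mul_simple_cancel_right]
  have h4 : prm cs w ((s i : W), ε) = (t, 1) := by
    have : ((s i : W), ε) = prm cs w⁻¹ (t, 1) := by rw [h1]
    rw [this, map_inv]
    exact Equiv.apply_symm_apply _ _
  rw [h2, h1, h3, prm_snd_neg, h4]

theorem odd_count_of_reflection {t : W} (ht : cs.IsReflection t) (τ : List B) (hτ : π τ = t) :
    Odd ((ris τ).count t) := by
  have h1 : prm cs (π τ) (t, 1) = (π τ * t * (π τ)⁻¹, (-1 : ℤˣ) ^ ((ris τ).count t) * 1) :=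
    prm_apply_word cs τ (t, 1)
  rw [hτ, prm_refl_self cs ht] at h1
  have h2 : (-1 : ℤˣ) ^ ((ris τ).count t) = -1 := by
    have := congrArg Prod.snd h1
    simpa using this.symm
  exact (neg_one_pow_odd_iff _).mp h2

theorem count_parity (ω ω' : List B) (h : π ω = π ω') (t : W) :
    (Odd ((ris ω).count t) ↔ Odd ((ris ω').count t)) := by
  have h1 := prm_apply_word cs ω (t, 1)
  have h2 := prm_apply_word cs ω' (t, 1)
  rw [h] at h1
  rw [h1] at h2
  have h3 := congrArg Prod.snd h2
  simp only [mul_one] at h3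
  constructor
  · intro ho
    apply (neg_one_pow_odd_iff _).mp
    rw [← h3, ho.neg_one_pow]
  · intro ho
    apply (neg_one_pow_odd_iff _).mp
    rw [h3, ho.neg_one_pow]

theorem ris_append (α β : List B) :
    ris (α ++ β) = (ris α).map (fun r => (π β)⁻¹ * r * π β) ++ ris β := by
  induction α with
  | nil => simp [rightInvSeq]
  | cons i α ih =>
    show ((π (α ++ β))⁻¹ * s i * π (α ++ β)) :: ris (α ++ β) = _
    rw [ih]
    have hc : ris (i :: α) = ((π α)⁻¹ * s i * π α) :: ris α := rfl
    rw [hc, List.map_cons, List.cons_append]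
    congr 1
    rw [wordProd_append, mul_inv_rev]
    group

theorem strong_exchange (ω : List B) {t : W} (ht : cs.IsReflection t)
    (hl : ℓ (π ω * t) < ℓ (π ω)) : ∃ j, j < ω.length ∧ (ris ω).getD j 1 = t := by
  obtain ⟨α, hαred, hα⟩ := cs.exists_reduced_word' (π ω * t)
  obtain ⟨τ, -, hτ⟩ := cs.exists_reduced_word' t
  have hprod : π (α ++ τ) = π ω := by
    rw [wordProd_append, ← hα, ← hτ, mul_assoc, ht.mul_self, mul_one]
  have hcount : (ris (α ++ τ)).count t = (ris α).count t + (ris τ).count t := by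
    rw [ris_append, List.count_append]
    congr 1
    have hinj : Function.Injective (fun r : W => (π τ)⁻¹ * r * π τ) := by
      intro x y hxy
      simpa using mul_left_cancel (mul_right_cancel hxy)
    have hfix : (fun r : W => (π τ)⁻¹ * r * π τ) t = t := by
      show ((π τ)⁻¹ * t * π τ) = t
      rw [← hτ, ht.inv, ht.mul_self, one_mul]
    conv_lhs => rw [← hfix]
    exact List.count_map_of_injective _ _ hinj t
  have heven : Even ((ris α).count t) := by
    by_contra hodd
    rw [Nat.not_even_iff_odd] at hodd
    have hmem : t ∈ ris α := List.count_pos_iff.mp (Nat.pos_of_ne_zero (by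
      intro h0; rw [h0] at hodd; exact (Nat.not_odd_iff_even.mpr Even.zero) hodd))
    have hinv := cs.isRightInversion_of_mem_rightInvSeq hαred hmem
    rw [← hα] at hinv
    have : ℓ (π ω * t * t) < ℓ (π ω * t) := hinv.2
    rw [mul_assoc, ht.mul_self, mul_one] at this
    omega
  have hoddτ : Odd ((ris τ).count t) := odd_count_of_reflection cs ht τ hτ.symm
  have hoddω : Odd ((ris ω).count t) := by
    rw [count_parity cs ω (α ++ τ) hprod.symm t, hcount]
    exact heven.add_odd hoddτ
  have hmem : t ∈ ris ω := List.count_pos_iff.mp (Nat.pos_of_ne_zero (by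
    intro h0; rw [h0] at hoddω; exact (Nat.not_odd_iff_even.mpr Even.zero) hoddω))
  obtain ⟨j, hj, hgt⟩ := List.mem_iff_getElem.mp hmem
  refine ⟨j, by simpa using hj, ?_⟩
  rw [List.getD_eq_getElem _ _ hj, hgt]

theorem strong_exchange' (ω : List B) {t : W} (ht : cs.IsReflection t)
    (hl : ℓ (π ω * t) < ℓ (π ω)) : ∃ ω', ω' <+ ω ∧ π ω' = π ω * t := by
  obtain ⟨j, hj, hgt⟩ := strong_exchange cs ω ht hl
  refine ⟨ω.eraseIdx j, List.eraseIdx_sublist _ _, ?_⟩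
  rw [← cs.wordProd_mul_getD_rightInvSeq ω j, hgt]


/-! ### Bruhat order basics -/

theorem edge_le {u t : W} (ht : cs.IsReflection t) (h : ℓ u < ℓ (u * t)) :
    BruhatLE cs u (u * t) :=
  Relation.ReflTransGen.single ⟨t, ht, rfl, h⟩

theorem le_cases {u v : W} (h : BruhatLE cs u v) : u = v ∨ ℓ u < ℓ v := by
  induction h with
  | refl => exact Or.inl rfl
  | tail hb e ih =>
    obtain ⟨t, ht, rfl, hlt⟩ := e
    right
    rcases ih with rfl | hlt2
    · exact hlt
    · exact hlt2.trans hlt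

theorem length_lt_of_lt {u v : W} (h : BruhatLE cs u v) (hne : u ≠ v) : ℓ u < ℓ v :=
  (le_cases cs h).resolve_left hne

theorem sublist_single {α : Type*} {l : List α} {a : α} (h : l <+ [a]) : l = [] ∨ l = [a] := by
  cases h with
  | cons _ h => exact Or.inl (List.sublist_nil.mp h)
  | cons_cons _ h => exact Or.inr (by rw [List.sublist_nil.mp h])

/-- Any word contains a reduced sublist with the same product. -/
theorem exists_reduced_sublist_self :
    ∀ (n : ℕ) (ω : List B), ω.length ≤ n → ∃ χ, χ <+ ω ∧ π χ = π ω ∧ cs.IsReduced χ := by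
  intro n
  induction n with
  | zero =>
    intro ω hω
    have : ω = [] := List.length_eq_zero_iff.mp (Nat.le_zero.mp hω)
    subst this
    exact ⟨[], List.Sublist.refl _, rfl, by simp [CoxeterSystem.IsReduced, wordProd_nil]⟩
  | succ n IH =>
    intro ω hω
    by_cases hred : cs.IsReduced ω
    · exact ⟨ω, List.Sublist.refl _, rfl, hred⟩
    · -- find a descent position
      have hdesc : ∃ j, j < ω.length ∧ ℓ (π (ω.take (j+1))) < ℓ (π (ω.take j)) := by
        by_contra hc
        push_neg at hc
        have key : ∀ j, j ≤ ω.length → ℓ (π (ω.take j)) = j := by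
          intro j
          induction j with
          | zero => simp [wordProd_nil]
          | succ j ihj =>
            intro hjle
            have hjlt : j < ω.length := by omega
            have h1 : ℓ (π (ω.take j)) = j := ihj (by omega)
            have htake : ω.take (j+1) = ω.take j ++ [ω[j]] := by
              rw [List.take_succ, List.getElem?_eq_getElem hjlt]
              rfl
            have hπt : π (ω.take (j+1)) = π (ω.take j) * s (ω[j]) := by
              rw [htake, wordProd_append]
              simp [wordProd_cons, wordProd_nil]
            have hnot := hc j hjlt
            rcases cs.length_mul_simple (π (ω.take j)) (ω[j]) with h2 | h2
            · rw [hπt, h2, h1]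
            · rw [hπt] at hnot ⊢
              omega
        have : ℓ (π ω) = ω.length := by
          have := key ω.length (le_refl _)
          rwa [List.take_length] at this
        exact hred this
      obtain ⟨j, hjlt, hj⟩ := hdesc
      have htake : ω.take (j+1) = ω.take j ++ [ω[j]] := by
        rw [List.take_succ, List.getElem?_eq_getElem hjlt]
        rfl
      have hπt : π (ω.take (j+1)) = π (ω.take j) * s (ω[j]) := by
        rw [htake, wordProd_append]
        simp [wordProd_cons, wordProd_nil]
      rw [hπt] at hj
      obtain ⟨jj, hjj, hgt⟩ := strong_exchange cs (ω.take j) (cs.isReflection_simple (ω[j])) hj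
      have herase : π ((ω.take j).eraseIdx jj) = π (ω.take j) * s (ω[j]) := by
        rw [← cs.wordProd_mul_getD_rightInvSeq (ω.take j) jj, hgt]
      -- the new shorter word
      set ω' := (ω.take j).eraseIdx jj ++ ω.drop (j+1) with hω'
      have hπω' : π ω' = π ω := by
        rw [hω', wordProd_append, herase, ← hπt, ← wordProd_append, List.take_append_drop]
      have hsub' : ω' <+ ω := by
        conv_rhs => rw [← List.take_append_drop (j+1) ω]
        rw [htake, List.append_assoc]
        exact List.Sublist.append (List.eraseIdx_sublist _ _)
          (List.sublist_append_right _ _)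
      have hlen' : ω'.length ≤ n := by
        have h1 : (ω.take j).length = j := List.length_take_of_le (by omega)
        have h2 : ((ω.take j).eraseIdx jj).length = j - 1 := by
          rw [List.length_eraseIdx_of_lt (by omega), h1]
        have h3 : (ω.drop (j+1)).length = ω.length - (j+1) := List.length_drop
        rw [hω', List.length_append, h2, h3]
        omega
      obtain ⟨χ, hχ1, hχ2, hχ3⟩ := IH ω' hlen'
      exact ⟨χ, hχ1.trans hsub', by rw [hχ2, hπω'], hχ3⟩

theorem exists_reduced_sublist_self' (ω : List B) :
    ∃ χ, χ <+ ω ∧ π χ = π ω ∧ cs.IsReduced χ :=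
  exists_reduced_sublist_self cs ω.length ω (le_refl _)

/-- Bruhat-smaller elements appear as reduced sublists of any word. -/
theorem le_exists_reduced_sublist {u v : W} (h : BruhatLE cs u v) :
    ∀ ω : List B, π ω = v → ∃ χ, χ <+ ω ∧ π χ = u ∧ cs.IsReduced χ := by
  induction h using Relation.ReflTransGen.head_induction_on with
  | refl =>
    intro ω hω
    obtain ⟨χ, h1, h2, h3⟩ := exists_reduced_sublist_self' cs ω
    exact ⟨χ, h1, by rw [h2, hω], h3⟩
  | head e hcb ih =>
    rename_i a c
    intro ω hω
    obtain ⟨t, ht, hc, hlt⟩ := e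
    obtain ⟨χc, hsub, hπ, hred⟩ := ih ω hω
    have hlc : ℓ (π χc * t) < ℓ (π χc) := by
      rw [hπ, hc, mul_assoc, ht.mul_self, mul_one]
      exact hc ▸ hlt
    obtain ⟨χ', hsub', hπ'⟩ := strong_exchange' cs χc ht hlc
    obtain ⟨χ, h1, h2, h3⟩ := exists_reduced_sublist_self' cs χ'
    refine ⟨χ, h1.trans (hsub'.trans hsub), ?_, h3⟩
    rw [h2, hπ', hπ, hc, mul_assoc, ht.mul_self, mul_one]

theorem finite_le (v : W) : {w | BruhatLE cs w v}.Finite := by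
  obtain ⟨ω, -, rfl⟩ := cs.exists_reduced_word' v
  apply Set.Finite.subset (Set.Finite.image (fun χ => π χ) ω.sublists.finite_toSet)
  intro w hw
  obtain ⟨χ, h1, h2, -⟩ := le_exists_reduced_sublist cs hw ω rfl
  exact ⟨χ, by simpa using List.mem_sublists.mpr h1, h2⟩

theorem interval_finite (u v : W) : {w | BruhatLE cs u w ∧ BruhatLE cs w v}.Finite :=
  (finite_le cs v).subset (fun _ hw => hw.2)


/-! ### The subword property -/

theorem subword_le (n : ℕ) :
    ∀ v : W, ℓ v = n → ∀ ω χ : List B, cs.IsReduced ω → π ω = v → χ <+ ω →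
      BruhatLE cs (π χ) v := by
  induction n using Nat.strong_induction_on with
  | _ n IH =>
  -- Property Z for ascent/descent pairs with top of length < n
  have z2 : ∀ w a : W, ∀ i : B, ℓ w < n → BruhatLE cs a w → ℓ a < ℓ (a * s i) →
      ℓ (w * s i) < ℓ w → BruhatLE cs (a * s i) w := by
    intro w a i hwn haw hasc hdesc
    obtain ⟨α, hαred, hα⟩ := cs.exists_reduced_word' (w * s i)
    have hπω : π (α ++ [i]) = w := by
      rw [wordProd_append, ← hα]
      simp [wordProd_cons, wordProd_nil, mul_assoc, cs.simple_mul_simple_self]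
    have hlenα : ℓ (w * s i) = α.length := by rw [hα]; exact hαred
    have hredω : cs.IsReduced (α ++ [i]) := by
      show ℓ (π (α ++ [i])) = (α ++ [i]).length
      rw [hπω, List.length_append, List.length_singleton]
      rcases cs.length_mul_simple w i with hd | hd <;> omega
    obtain ⟨χ, hχsub, hχπ, hχred⟩ := le_exists_reduced_sublist cs haw (α ++ [i]) hπω
    obtain ⟨χ₁, χ₂, rfl, h1, h2⟩ := List.sublist_append_iff.mp hχsub
    rcases sublist_single h2 with rfl | rfl
    · -- χ uses no final letter : append s i to it
      rw [List.append_nil] at hχπ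
      have hsub2 : χ₁ ++ [i] <+ α ++ [i] := List.Sublist.append h1 (List.Sublist.refl _)
      have := IH (ℓ w) hwn w rfl (α ++ [i]) (χ₁ ++ [i]) hredω hπω hsub2
      have hπ2 : π (χ₁ ++ [i]) = a * s i := by
        rw [wordProd_append, hχπ]
        simp [wordProd_cons, wordProd_nil]
      rwa [hπ2] at this
    · -- χ ends with the final letter : contradiction with ascent
      exfalso
      have hπ2 : a * s i = π χ₁ := by
        rw [← hχπ, wordProd_append, mul_assoc]
        simp [wordProd_cons, wordProd_nil, cs.simple_mul_simple_self]
      have hl1 : ℓ a = χ₁.length + 1 := by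
        have := hχred
        rw [← hχπ]
        rw [show ℓ (π (χ₁ ++ [i])) = (χ₁ ++ [i]).length from hχred]
        simp
      have hl2 : ℓ (a * s i) ≤ χ₁.length := by
        rw [hπ2]
        exact cs.length_wordProd_le χ₁
      omega
  have z1 : ∀ a b : W, BruhatLE cs a b → ∀ i : B, ℓ b < n → ℓ a < ℓ (a * s i) →
      ℓ b < ℓ (b * s i) → BruhatLE cs (a * s i) (b * s i) := by
    intro a b hab
    induction hab with
    | refl => intro i _ _ _; exact Relation.ReflTransGen.refl
    | @tail w b' hw e ih =>
      intro i hbn hasc hbsc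
      obtain ⟨t, ht, rfl, hlt⟩ := e
      rcases cs.length_mul_simple w i with hascw | hdescw
      · -- ascent at w
        have h1 : BruhatLE cs (a * s i) (w * s i) :=
          ih i (by omega) hasc (by omega)
        have h2 : BruhatLE cs (w * s i) (w * t * s i) := by
          have hrefl : cs.IsReflection (s i * t * s i) := by
            have := ht.conj (s i)
            rwa [cs.inv_simple] at this
          have heq : (w * s i) * (s i * t * s i) = w * t * s i := by
            rw [← mul_assoc, ← mul_assoc, mul_assoc w]
            rw [cs.simple_mul_simple_self, mul_one]
          have hlen : ℓ (w * s i) < ℓ (w * t * s i) := by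
            rcases cs.length_mul_simple (w * t) i with h3 | h3 <;> omega
          have := edge_le cs hrefl (heq ▸ hlen)
          rwa [heq] at this
        exact h1.trans h2
      · -- descent at w
        have hdw : ℓ (w * s i) < ℓ w := by omega
        have h1 : BruhatLE cs (a * s i) w := z2 w a i (by omega) hw hasc hdw
        have h2 : BruhatLE cs w (w * t) := edge_le cs ht hlt
        have h3 : BruhatLE cs (w * t) (w * t * s i) :=
          edge_le cs (cs.isReflection_simple i) hbsc
        exact h1.trans (h2.trans h3)
  intro v hv ω χ hred hπω hχ
  obtain ⟨χ', hs', hp', hr'⟩ := exists_reduced_sublist_self' cs χ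
  rw [← hp']
  have hχ' : χ' <+ ω := hs'.trans hχ
  rcases List.eq_nil_or_concat' ω with rfl | ⟨ω₁, i, rfl⟩
  · rw [List.sublist_nil.mp hχ']
    rw [← hπω]
    exact Relation.ReflTransGen.refl
  · have hω₁red : cs.IsReduced ω₁ := by
      have := CoxeterSystem.IsReduced.take hred ω₁.length
      rwa [List.take_left] at this
    have hπv : π ω₁ * s i = v := by
      rw [← hπω, wordProd_append]
      simp [wordProd_cons, wordProd_nil]
    have hlv : ℓ v = ω₁.length + 1 := by
      rw [← hπω, show ℓ (π (ω₁ ++ [i])) = (ω₁ ++ [i]).length from hred]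
      simp
    have hlv' : ℓ (π ω₁) = ω₁.length := hω₁red
    obtain ⟨χ₁, χ₂, rfl, h1, h2⟩ := List.sublist_append_iff.mp hχ'
    rcases sublist_single h2 with rfl | rfl
    · rw [List.append_nil]
      have hle : BruhatLE cs (π χ₁) (π ω₁) :=
        IH ω₁.length (by omega) (π ω₁) hlv' ω₁ χ₁ hω₁red rfl h1
      have hedge : BruhatLE cs (π ω₁) v := by
        have hlt2 : ℓ (π ω₁) < ℓ (π ω₁ * s i) := by rw [hπv]; omega
        have := edge_le cs (cs.isReflection_simple i) hlt2
        rwa [hπv] at this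
      exact hle.trans hedge
    · have hχ₁red : cs.IsReduced χ₁ := by
        have := CoxeterSystem.IsReduced.take hr' χ₁.length
        rwa [List.take_left] at this
      have hle : BruhatLE cs (π χ₁) (π ω₁) :=
        IH ω₁.length (by omega) (π ω₁) hlv' ω₁ χ₁ hω₁red rfl h1
      have hπχ : π (χ₁ ++ [i]) = π χ₁ * s i := by
        rw [wordProd_append]
        simp [wordProd_cons, wordProd_nil]
      have hlχ : ℓ (π (χ₁ ++ [i])) = χ₁.length + 1 := by
        rw [show ℓ (π (χ₁ ++ [i])) = (χ₁ ++ [i]).length from hr']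
        simp
      have hascχ : ℓ (π χ₁) < ℓ (π χ₁ * s i) := by
        have h5 : ℓ (π χ₁) = χ₁.length := hχ₁red
        rw [← hπχ]
        omega
      have hascω : ℓ (π ω₁) < ℓ (π ω₁ * s i) := by
        rw [hπv]
        omega
      have := z1 (π χ₁) (π ω₁) hle i (by omega) hascχ hascω
      rw [hπv] at this
      rw [hπχ]
      exact this

theorem subword_le' {ω χ : List B} (hred : cs.IsReduced ω) (hχ : χ <+ ω) :
    BruhatLE cs (π χ) (π ω) :=
  subword_le cs (ℓ (π ω)) (π ω) rfl ω χ hred rfl hχ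

/-! ### Lifting lemmas -/

theorem lemL1 {x y : W} {i : B} (hxy : BruhatLE cs x y) (hdesc : ℓ (y * s i) < ℓ y) :
    BruhatLE cs (x * s i) y := by
  obtain ⟨α, hαred, hα⟩ := cs.exists_reduced_word' (y * s i)
  have hπω : π (α ++ [i]) = y := by
    rw [wordProd_append, ← hα]
    simp [wordProd_cons, wordProd_nil, mul_assoc, cs.simple_mul_simple_self]
  have hlenα : ℓ (y * s i) = α.length := by rw [hα]; exact hαred
  have hredω : cs.IsReduced (α ++ [i]) := by
    show ℓ (π (α ++ [i])) = (α ++ [i]).length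
    rw [hπω, List.length_append, List.length_singleton]
    rcases cs.length_mul_simple y i with hd | hd <;> omega
  obtain ⟨χ, hχsub, hχπ, hχred⟩ := le_exists_reduced_sublist cs hxy (α ++ [i]) hπω
  obtain ⟨χ₁, χ₂, rfl, h1, h2⟩ := List.sublist_append_iff.mp hχsub
  rcases sublist_single h2 with rfl | rfl
  · rw [List.append_nil] at hχπ
    have hsub2 : χ₁ ++ [i] <+ α ++ [i] := List.Sublist.append h1 (List.Sublist.refl _)
    have := subword_le' cs hredω hsub2
    rw [hπω, wordProd_append] at this
    simp only [wordProd_cons, wordProd_nil, mul_one] at this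
    rwa [hχπ] at this
  · have hπ2 : x * s i = π χ₁ := by
      rw [← hχπ, wordProd_append, mul_assoc]
      simp [wordProd_cons, wordProd_nil, cs.simple_mul_simple_self]
    have hsub2 : χ₁ <+ α ++ [i] := h1.trans (List.sublist_append_left _ _)
    have := subword_le' cs hredω hsub2
    rw [hπω, ← hπ2] at this
    exact this

theorem lemL3 {x y : W} {i : B} (hxy : BruhatLE cs x y) (hdesc : ℓ (y * s i) < ℓ y)
    (hasc : ℓ x < ℓ (x * s i)) : BruhatLE cs x (y * s i) := by
  obtain ⟨α, hαred, hα⟩ := cs.exists_reduced_word' (y * s i)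
  have hπω : π (α ++ [i]) = y := by
    rw [wordProd_append, ← hα]
    simp [wordProd_cons, wordProd_nil, mul_assoc, cs.simple_mul_simple_self]
  have hlenα : ℓ (y * s i) = α.length := by rw [hα]; exact hαred
  have hredω : cs.IsReduced (α ++ [i]) := by
    show ℓ (π (α ++ [i])) = (α ++ [i]).length
    rw [hπω, List.length_append, List.length_singleton]
    rcases cs.length_mul_simple y i with hd | hd <;> omega
  obtain ⟨χ, hχsub, hχπ, hχred⟩ := le_exists_reduced_sublist cs hxy (α ++ [i]) hπω
  obtain ⟨χ₁, χ₂, rfl, h1, h2⟩ := List.sublist_append_iff.mp hχsub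
  rcases sublist_single h2 with rfl | rfl
  · rw [List.append_nil] at hχπ
    have := subword_le' cs hαred h1
    rw [← hα, hχπ] at this
    exact this
  · exfalso
    have hπ2 : x * s i = π χ₁ := by
      rw [← hχπ, wordProd_append, mul_assoc]
      simp [wordProd_cons, wordProd_nil, cs.simple_mul_simple_self]
    have hl1 : ℓ x = χ₁.length + 1 := by
      rw [← hχπ, show ℓ (π (χ₁ ++ [i])) = (χ₁ ++ [i]).length from hχred]
      simp
    have hl2 : ℓ (x * s i) ≤ χ₁.length := by
      rw [hπ2]
      exact cs.length_wordProd_le χ₁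
    omega

theorem lemZ1 {x y : W} {i : B} (hxy : BruhatLE cs x y) :
    ℓ x < ℓ (x * s i) → ℓ y < ℓ (y * s i) → BruhatLE cs (x * s i) (y * s i) := by
  induction hxy with
  | refl => intro _ _; exact Relation.ReflTransGen.refl
  | @tail w b' hw e ih =>
    intro hascx hascy
    obtain ⟨t, ht, rfl, hlt⟩ := e
    rcases cs.length_mul_simple w i with hascw | hdescw
    · have h1 : BruhatLE cs (x * s i) (w * s i) := ih hascx (by omega)
      have h2 : BruhatLE cs (w * s i) (w * t * s i) := by
        have hrefl : cs.IsReflection (s i * t * s i) := by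
          have := ht.conj (s i)
          rwa [cs.inv_simple] at this
        have heq : (w * s i) * (s i * t * s i) = w * t * s i := by
          rw [← mul_assoc, ← mul_assoc, mul_assoc w]
          rw [cs.simple_mul_simple_self, mul_one]
        have hlen : ℓ (w * s i) < ℓ (w * t * s i) := by
          rcases cs.length_mul_simple (w * t) i with h3 | h3 <;> omega
        have := edge_le cs hrefl (heq ▸ hlen)
        rwa [heq] at this
      exact h1.trans h2
    · have hdw : ℓ (w * s i) < ℓ w := by omega
      have h1 : BruhatLE cs (x * s i) w := lemL1 cs hw hdw
      have h2 : BruhatLE cs w (w * t) := edge_le cs ht hlt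
      have h3 : BruhatLE cs (w * t) (w * t * s i) :=
        edge_le cs (cs.isReflection_simple i) hascy
      exact h1.trans (h2.trans h3)


/-! ### The main theorem -/

noncomputable def itv (u v : W) : Finset W := (interval_finite cs u v).toFinset

theorem mem_itv {u v w : W} : w ∈ itv cs u v ↔ BruhatLE cs u w ∧ BruhatLE cs w v := by
  simp [itv, Set.Finite.mem_toFinset]

theorem sum_itv_eq_zero_of_asc_desc {u v : W} {i : B} (huv : BruhatLE cs u v)
    (hascu : ℓ u < ℓ (u * s i)) (hdescv : ℓ (v * s i) < ℓ v) :
    ∑ w ∈ itv cs u v, (-1 : ℤ) ^ ℓ w = 0 := by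
  have hmem : ∀ w ∈ itv cs u v, w * s i ∈ itv cs u v := by
    intro w hw
    rw [mem_itv] at hw ⊢
    obtain ⟨h1, h2⟩ := hw
    refine ⟨?_, lemL1 cs h2 hdescv⟩
    rcases cs.length_mul_simple w i with h | h
    · exact h1.trans (edge_le cs (cs.isReflection_simple i) (by omega))
    · exact lemL3 cs h1 (by omega) hascu
  have hpair : ∀ w, (-1 : ℤ) ^ ℓ w + (-1 : ℤ) ^ ℓ (w * s i) = 0 := by
    intro w
    rcases cs.length_mul_simple w i with h | h
    · rw [h, pow_succ]; ring
    · rw [show ℓ w = ℓ (w * s i) + 1 from h.symm, pow_succ]; ring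
  exact Finset.sum_involution (fun w _ => w * s i) (fun w _ => hpair w)
    (fun w _ _ hc => cs.length_mul_simple_ne w i (congrArg cs.length hc))
    hmem (fun w _ => cs.simple_mul_simple_cancel_right i)

theorem main_aux : ∀ (n : ℕ) (v : W), ℓ v = n → ∀ u : W, BruhatLE cs u v → u ≠ v →
    ∑ w ∈ itv cs u v, (-1 : ℤ) ^ ℓ w = 0 := by
  intro n
  induction n using Nat.strong_induction_on with
  | _ n IH =>
  intro v hv u huv hne
  have hlt : ℓ u < ℓ v := length_lt_of_lt cs huv hne
  have hv1 : v ≠ 1 := by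
    intro h
    rw [h, cs.length_one] at hlt
    omega
  obtain ⟨i, hdescv⟩ := cs.exists_rightDescent_of_ne_one hv1
  have hdescv' : ℓ (v * s i) < ℓ v := hdescv
  rcases cs.length_mul_simple u i with hascu | hdescu
  · -- Case 1 : u ascends at i
    exact sum_itv_eq_zero_of_asc_desc cs huv (by omega) hdescv'
  · -- Case 2 : u descends at i
    set u' := u * s i with hu'
    set v' := v * s i with hv'
    have hu's : u' * s i = u := by rw [hu']; exact cs.simple_mul_simple_cancel_right i
    have hv's : v' * s i = v := by rw [hv']; exact cs.simple_mul_simple_cancel_right i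
    have hlu' : ℓ u' + 1 = ℓ u := hdescu
    have hlv' : ℓ v' + 1 = ℓ v := by
      have hd : ℓ v' < ℓ v := hdescv'
      rw [hv']
      rw [hv'] at hd
      rcases cs.length_mul_simple v i with h | h <;> omega
    have hascu' : ℓ u' < ℓ (u' * s i) := by rw [hu's]; omega
    have hascv' : ℓ v' < ℓ (v' * s i) := by rw [hv's]; omega
    have hu'u : BruhatLE cs u' u := by
      have := edge_le cs (cs.isReflection_simple i) hascu'
      rwa [hu's] at this
    have hu'v : BruhatLE cs u' v := hu'u.trans huv
    have hv'v : BruhatLE cs v' v := by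
      have := edge_le cs (cs.isReflection_simple i) hascv'
      rwa [hv's] at this
    have hu'v' : BruhatLE cs u' v' := lemL3 cs hu'v hdescv' hascu'
    classical
    have hsplit1 := (Finset.sum_filter_add_sum_filter_not (itv cs u' v)
      (fun w => BruhatLE cs u w) (fun w => (-1 : ℤ) ^ ℓ w)).symm
    have hf1 : (itv cs u' v).filter (fun w => BruhatLE cs u w) = itv cs u v := by
      ext w
      simp only [Finset.mem_filter, mem_itv]
      constructor
      · rintro ⟨⟨-, h2⟩, h3⟩; exact ⟨h3, h2⟩
      · rintro ⟨h1, h2⟩; exact ⟨⟨hu'u.trans h1, h2⟩, h1⟩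
    have hD : (itv cs u' v).filter (fun w => ¬ BruhatLE cs u w)
        = (itv cs u' v').filter (fun w => ¬ BruhatLE cs u w) := by
      ext w
      simp only [Finset.mem_filter, mem_itv]
      constructor
      · rintro ⟨⟨h1, h2⟩, h3⟩
        refine ⟨⟨h1, ?_⟩, h3⟩
        by_cases hwdesc : ℓ (w * s i) < ℓ w
        · exfalso
          have hws : BruhatLE cs u' (w * s i) := lemL3 cs h1 hwdesc hascu'
          have hascws : ℓ (w * s i) < ℓ (w * s i * s i) := by
            rw [cs.simple_mul_simple_cancel_right]; omega
          have := lemZ1 cs hws hascu' hascws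
          rw [hu's, cs.simple_mul_simple_cancel_right] at this
          exact h3 this
        · exact lemL3 cs h2 hdescv'
            (by rcases cs.length_mul_simple w i with h | h <;> omega)
      · rintro ⟨⟨h1, h2⟩, h3⟩
        exact ⟨⟨h1, h2.trans hv'v⟩, h3⟩
    have hsum_u'v : ∑ w ∈ itv cs u' v, (-1 : ℤ) ^ ℓ w = 0 :=
      sum_itv_eq_zero_of_asc_desc cs hu'v hascu' hdescv'
    have hsum_u'v' : ∑ w ∈ itv cs u' v', (-1 : ℤ) ^ ℓ w = 0 := by
      apply IH (ℓ v') (by omega) v' rfl u' hu'v'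
      intro h
      rw [h] at hlu'
      omega
    have hsplit2 := (Finset.sum_filter_add_sum_filter_not (itv cs u' v')
      (fun w => BruhatLE cs u w) (fun w => (-1 : ℤ) ^ ℓ w)).symm
    have hsum_filter_u : ∑ w ∈ (itv cs u' v').filter (fun w => BruhatLE cs u w),
        (-1 : ℤ) ^ ℓ w = 0 := by
      by_cases huv' : BruhatLE cs u v'
      · have heq : (itv cs u' v').filter (fun w => BruhatLE cs u w) = itv cs u v' := by
          ext w
          simp only [Finset.mem_filter, mem_itv]
          constructor
          · rintro ⟨⟨-, h2⟩, h3⟩; exact ⟨h3, h2⟩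
          · rintro ⟨h1, h2⟩; exact ⟨⟨hu'u.trans h1, h2⟩, h1⟩
        rw [heq]
        apply IH (ℓ v') (by omega) v' rfl u huv'
        intro h
        have hcontra : u' = v := by rw [hu', h, hv's]
        rw [hcontra] at hlu'
        omega
      · have heq : (itv cs u' v').filter (fun w => BruhatLE cs u w) = ∅ := by
          ext w
          simp only [Finset.mem_filter, mem_itv, Finset.notMem_empty, iff_false]
          rintro ⟨⟨-, h2⟩, h3⟩
          exact huv' (h3.trans h2)
        rw [heq, Finset.sum_empty]
    rw [hf1, hD] at hsplit1
    linarith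

end BruhatAux

open BruhatAux in
/-- Any nontrivial Bruhat interval `[u,v]` has as many elements of even length as of odd
length: the sum of `(-1)^{ℓ(w)}` over the interval vanishes. -/
theorem interval_alternating_sum_eq_zero (cs : CoxeterSystem M W)
    (u v : W) (huv : BruhatLE cs u v) (hne : u ≠ v)
    (hfin : {w | BruhatLE cs u w ∧ BruhatLE cs w v}.Finite) :
    ∑ w ∈ hfin.toFinset, (-1 : ℤ) ^ (cs.length w) = 0 := by
  have h : hfin.toFinset = itv cs u v := by
    ext w
    simp [itv, Set.Finite.mem_toFinset]
  rw [h]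
  exact main_aux cs (cs.length v) v rfl u huv hne
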